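/- For all unit vectors u, v ∈ ℝ³, the inner product ⟨u, v⟩ is the greatest element of the set {(trace(R) − 1)/2 : R ∈ SO(3), Ru = v}; that is, ⟨u, v⟩ = max_{R ∈ SO(3), Ru = v} cos(θ(R)), and this maximum is attained. -/

import Mathlib

open Matrix

/-- `SO3 R` means `R` is a real 3×3 special orthogonal (rotation) matrix. -/
def SO3 (R : Matrix (Fin 3) (Fin 3) ℝ) : Prop := Rᵀ * R = 1 ∧ R.det = 1

/-- Action of a 3×3 matrix on ℝ³ by matrix-vector multiplication. -/
noncomputable def act (R : Matrix (Fin 3) (Fin 3) ℝ) (v : EuclideanSpace ℝ (Fin 3)) :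
    EuclideanSpace ℝ (Fin 3) := Matrix.toEuclideanLin R v

noncomputable def rfl3 (x : Fin 3 → ℝ) : Matrix (Fin 3) (Fin 3) ℝ :=
  1 - (2 / (x ⬝ᵥ x)) • vecMulVec x x

lemma vmv_mul_vmv (x y z w : Fin 3 → ℝ) :
    vecMulVec x y * vecMulVec z w = (y ⬝ᵥ z) • vecMulVec x w := by
  ext i j
  simp [Matrix.mul_apply, vecMulVec_apply, dotProduct, Fin.sum_univ_three]
  ring

lemma mul_vmv (A : Matrix (Fin 3) (Fin 3) ℝ) (x y : Fin 3 → ℝ) :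
    A * vecMulVec x y = vecMulVec (A *ᵥ x) y := by
  ext i j
  simp [Matrix.mul_apply, vecMulVec_apply, Matrix.mulVec, dotProduct, Fin.sum_univ_three]
  ring

lemma vmv_mulVec (x y z : Fin 3 → ℝ) : vecMulVec x y *ᵥ z = (y ⬝ᵥ z) • x := by
  ext i
  simp [vecMulVec_apply, Matrix.mulVec, dotProduct, Fin.sum_univ_three]
  ring

lemma trace_vmv (x y : Fin 3 → ℝ) : trace (vecMulVec x y) = x ⬝ᵥ y := by
  simp [Matrix.trace_fin_three, vecMulVec_apply, dotProduct, Fin.sum_univ_three]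

lemma vmv_transpose (x y : Fin 3 → ℝ) : (vecMulVec x y)ᵀ = vecMulVec y x := by
  ext i j
  simp [vecMulVec_apply, mul_comm]

lemma rfl3_transpose (x : Fin 3 → ℝ) : (rfl3 x)ᵀ = rfl3 x := by
  rw [rfl3, transpose_sub, transpose_one, transpose_smul, vmv_transpose]

lemma sq_expand (M : Matrix (Fin 3) (Fin 3) ℝ) (c : ℝ) :
    (1 - c • M) * (1 - c • M) = 1 - c • M - c • M + (c * c) • (M * M) := by
  simp only [sub_mul, mul_sub, one_mul, mul_one, smul_mul_assoc, mul_smul_comm, smul_smul,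
    smul_sub]
  module

lemma rfl3_mul_self (x : Fin 3 → ℝ) (hx : x ⬝ᵥ x ≠ 0) : rfl3 x * rfl3 x = 1 := by
  rw [rfl3, sq_expand, vmv_mul_vmv, smul_smul]
  set s := x ⬝ᵥ x with hs
  have h : 2 / s * (2 / s) * s = 2 / s + 2 / s := by
    field_simp
    ring
  rw [h, add_smul]
  abel

lemma rfl3_mulVec (x z : Fin 3 → ℝ) :
    rfl3 x *ᵥ z = z - (2 * (x ⬝ᵥ z) / (x ⬝ᵥ x)) • x := by
  simp only [rfl3, sub_mulVec, one_mulVec, smul_mulVec, vmv_mulVec, smul_smul]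
  ring_nf

lemma rfl3_det (x : Fin 3 → ℝ) (hx : x ⬝ᵥ x ≠ 0) : (rfl3 x).det = -1 := by
  have h : (rfl3 x).det = 1 - (2 / (x ⬝ᵥ x)) * (x ⬝ᵥ x) := by
    simp [rfl3, det_fin_three, vecMulVec_apply, dotProduct, Fin.sum_univ_three,
      Matrix.one_apply]
    ring
  rw [h, div_mul_cancel₀ _ hx]
  norm_num

lemma rfl3_trace (x : Fin 3 → ℝ) (hx : x ⬝ᵥ x ≠ 0) : (rfl3 x).trace = 1 := by
  rw [rfl3, trace_sub, trace_smul, trace_one, trace_vmv, smul_eq_mul,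
    div_mul_cancel₀ _ hx]
  norm_num

lemma trace_rfl3_mul (a b : Fin 3 → ℝ) (ha : a ⬝ᵥ a ≠ 0) (hb : b ⬝ᵥ b ≠ 0) :
    (rfl3 a * rfl3 b).trace
      = 1 - 2 / (b ⬝ᵥ b) * (b ⬝ᵥ b - 2 * (a ⬝ᵥ b) / (a ⬝ᵥ a) * (a ⬝ᵥ b)) := by
  have h1 : rfl3 a * rfl3 b = rfl3 a - (2 / (b ⬝ᵥ b)) • vecMulVec (rfl3 a *ᵥ b) b := by
    rw [show rfl3 b = 1 - (2 / (b ⬝ᵥ b)) • vecMulVec b b from rfl, mul_sub, mul_one,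
      mul_smul_comm, mul_vmv]
  rw [h1, trace_sub, trace_smul, trace_vmv, rfl3_trace a ha, smul_eq_mul, rfl3_mulVec,
    sub_dotProduct, smul_dotProduct, smul_eq_mul]

lemma refl_prod_SO3 (a b : Fin 3 → ℝ) (ha : a ⬝ᵥ a ≠ 0) (hb : b ⬝ᵥ b ≠ 0) :
    SO3 (rfl3 a * rfl3 b) := by
  constructor
  · rw [transpose_mul, rfl3_transpose, rfl3_transpose]
    calc rfl3 b * rfl3 a * (rfl3 a * rfl3 b)
        = rfl3 b * (rfl3 a * rfl3 a) * rfl3 b := by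
          simp only [Matrix.mul_assoc]
      _ = 1 := by rw [rfl3_mul_self a ha, Matrix.mul_one, rfl3_mul_self b hb]
  · rw [det_mul, rfl3_det a ha, rfl3_det b hb]
    norm_num

lemma adj_formula (M : Matrix (Fin 3) (Fin 3) ℝ) :
    adjugate M = M*M - (trace M) • M
      + (((trace M)^2 - trace (M*M))/2) • (1 : Matrix (Fin 3) (Fin 3) ℝ) := by
  rw [adjugate_fin_three]
  ext i j
  fin_cases i <;> fin_cases j <;>
    simp [Matrix.mul_apply, Matrix.trace_fin_three, Fin.sum_univ_three, Matrix.one_apply] <;> ring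

lemma so3_key (R : Matrix (Fin 3) (Fin 3) ℝ) (h1 : Rᵀ * R = 1) (h2 : R.det = 1) :
    (R + Rᵀ + (1 - trace R) • 1) * (R + Rᵀ + (1 - trace R) • 1)
      = (3 - trace R) • (R + Rᵀ + (1 - trace R) • 1) := by
  have hRT : R * Rᵀ = 1 := mul_eq_one_comm.mpr h1
  have hadj : adjugate R = Rᵀ := by
    have hinv : R⁻¹ = Rᵀ := inv_eq_left_inv h1
    have := Matrix.inv_def R
    rw [h2, Ring.inverse_one, one_smul, hinv] at this
    exact this.symm
  have ht : Rᵀ = R*R - (trace R) • R + (((trace R)^2 - trace (R*R))/2) • 1 := by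
    rw [← hadj]; exact adj_formula R
  have hc : ((trace R)^2 - trace (R*R))/2 = trace R := by
    have h := congrArg Matrix.trace ht
    simp only [trace_transpose, trace_add, trace_sub, trace_smul, trace_one, smul_eq_mul,
      Fintype.card_fin] at h
    linear_combination -h
  rw [hc] at ht
  have hR2 : R * R = Rᵀ + (trace R) • R - (trace R) • 1 := by
    rw [ht]; abel
  have hT2 : Rᵀ * Rᵀ = R + (trace R) • Rᵀ - (trace R) • 1 := by
    have h := congrArg Matrix.transpose hR2
    simpa [transpose_mul, transpose_add, transpose_sub, transpose_smul, transpose_one,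
      transpose_transpose] using h
  simp only [add_mul, mul_add, smul_mul_assoc, mul_smul_comm, mul_one, one_mul]
  rw [hR2, hT2, h1, hRT]
  module

lemma so3_trace_le_aux (R : Matrix (Fin 3) (Fin 3) ℝ) (h1 : Rᵀ * R = 1) (h2 : R.det = 1)
    (u : Fin 3 → ℝ) (hu : u ⬝ᵥ u = 1) :
    (trace R - 1) / 2 ≤ u ⬝ᵥ (R *ᵥ u) := by
  set t := trace R with htdef
  set G := R + Rᵀ + (1 - t) • (1 : Matrix (Fin 3) (Fin 3) ℝ) with hGdef
  have hGT : Gᵀ = G := by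
    rw [hGdef]
    simp [transpose_add, transpose_smul, transpose_one]
    abel
  have hGG : G * G = (3 - t) • G := so3_key R h1 h2
  have ht3 : t ≤ 3 := by
    have e0 := congrFun (congrFun h1 0) 0
    have e1 := congrFun (congrFun h1 1) 1
    have e2 := congrFun (congrFun h1 2) 2
    simp [Matrix.mul_apply, Fin.sum_univ_three, Matrix.one_apply, transpose_apply] at e0 e1 e2
    rw [htdef]
    rw [Matrix.trace_fin_three]
    have d0 : R 0 0 ≤ 1 := by nlinarith [sq_nonneg (R 1 0), sq_nonneg (R 2 0), sq_nonneg (R 0 0 - 1)]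
    have d1 : R 1 1 ≤ 1 := by nlinarith [sq_nonneg (R 0 1), sq_nonneg (R 2 1), sq_nonneg (R 1 1 - 1)]
    have d2 : R 2 2 ≤ 1 := by nlinarith [sq_nonneg (R 0 2), sq_nonneg (R 1 2), sq_nonneg (R 2 2 - 1)]
    linarith
  set y := G *ᵥ u with hydef
  have hyy : y ⬝ᵥ y = (3 - t) * (u ⬝ᵥ y) := by
    have k1 : u ⬝ᵥ ((G * G) *ᵥ u) = y ⬝ᵥ y := by
      rw [← mulVec_mulVec, dotProduct_mulVec, ← hydef]
      congr 1
      rw [← hGT, vecMul_transpose, hGdef]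
    have k2 : u ⬝ᵥ ((G * G) *ᵥ u) = (3 - t) * (u ⬝ᵥ y) := by
      rw [hGG, smul_mulVec, dotProduct_smul, smul_eq_mul, hydef]
    rw [← k1, k2]
  have hy0 : 0 ≤ y ⬝ᵥ y := by
    apply Finset.sum_nonneg
    intro i _
    exact mul_self_nonneg _
  have hq : 0 ≤ u ⬝ᵥ y := by
    rcases lt_or_eq_of_le ht3 with h | h
    · nlinarith
    · have h0 : y ⬝ᵥ y = 0 := by rw [hyy, ← h]; ring
      have h0' : y = 0 := dotProduct_self_eq_zero.mp h0
      rw [h0']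
      simp
  have hexp : u ⬝ᵥ y = 2 * (u ⬝ᵥ (R *ᵥ u)) + (1 - t) := by
    rw [hydef, hGdef]
    simp only [add_mulVec, smul_mulVec, one_mulVec, dotProduct_add, dotProduct_smul,
      smul_eq_mul]
    have h3 : u ⬝ᵥ (Rᵀ *ᵥ u) = u ⬝ᵥ (R *ᵥ u) := by
      rw [mulVec_transpose, dotProduct_comm, dotProduct_mulVec]
    rw [h3, hu]
    ring
  rw [hexp] at hq
  linarith

theorem stmt_3 (u v : EuclideanSpace ℝ (Fin 3)) (hu : ‖u‖ = 1) (hv : ‖v‖ = 1) :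
    IsGreatest {c : ℝ | ∃ R : Matrix (Fin 3) (Fin 3) ℝ,
        SO3 R ∧ act R u = v ∧ c = (R.trace - 1) / 2}
      (inner ℝ u v : ℝ) := by
  classical
  set u' : Fin 3 → ℝ := (WithLp.equiv 2 (Fin 3 → ℝ)) u with hu'def
  set v' : Fin 3 → ℝ := (WithLp.equiv 2 (Fin 3 → ℝ)) v with hv'def
  have hinner : (inner ℝ u v : ℝ) = u' ⬝ᵥ v' := by
    simp [PiLp.inner_apply, RCLike.inner_apply, conj_trivial, dotProduct, hu'def, hv'def,
      WithLp.equiv_apply]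
    exact Finset.sum_congr rfl (fun i _ => mul_comm _ _)
  have hu1 : u' ⬝ᵥ u' = 1 := by
    have h : (inner ℝ u u : ℝ) = 1 := by
      rw [real_inner_self_eq_norm_sq, hu]; norm_num
    rw [← h]
    simp [PiLp.inner_apply, RCLike.inner_apply, conj_trivial, dotProduct, hu'def,
      WithLp.equiv_apply]
    rw [← real_inner_self_eq_norm_sq]; simp only [PiLp.inner_apply, RCLike.inner_apply, conj_trivial]
  have hv1 : v' ⬝ᵥ v' = 1 := by
    have h : (inner ℝ v v : ℝ) = 1 := by
      rw [real_inner_self_eq_norm_sq, hv]; norm_num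
    rw [← h]
    simp [PiLp.inner_apply, RCLike.inner_apply, conj_trivial, dotProduct, hv'def,
      WithLp.equiv_apply]
    rw [← real_inner_self_eq_norm_sq]; simp only [PiLp.inner_apply, RCLike.inner_apply, conj_trivial]
  have hact : ∀ R : Matrix (Fin 3) (Fin 3) ℝ, act R u = v ↔ R *ᵥ u' = v' := by
    intro R
    rw [act, Matrix.toEuclideanLin_apply, hu'def, hv'def, WithLp.equiv_apply, WithLp.equiv_apply]
    exact ⟨fun h => by rw [← h], fun h => by rw [h]⟩
  constructor
  · -- membership: construct the rotation
    by_cases hw : (u' + v') ⬝ᵥ (u' + v') = 0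
    · -- v = -u
      have hw0 : u' + v' = 0 := dotProduct_self_eq_zero.mp hw
      have hvv : v' = -u' := by
        rw [← neg_eq_of_add_eq_zero_right hw0]
      have hc : u' ⬝ᵥ v' = -1 := by
        rw [hvv, dotProduct_neg, hu1]
      set a : Fin 3 → ℝ := if u' 0 = 0 then ![1,0,0] else ![-(u' 1), u' 0, 0] with hadef
      have ha : a ⬝ᵥ a ≠ 0 := by
        rw [hadef]
        split_ifs with h0
        · norm_num [dotProduct, Fin.sum_univ_three, Matrix.cons_val_two]
        · simp only [dotProduct, Fin.sum_univ_three]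
          simp [Matrix.cons_val_zero, Matrix.cons_val_one]
          intro hcon
          exact h0 (by nlinarith [sq_nonneg (u' 0), sq_nonneg (u' 1)])
      have hau : a ⬝ᵥ u' = 0 := by
        rw [hadef]
        split_ifs with h0
        · simp [dotProduct, Fin.sum_univ_three, h0]
        · simp [dotProduct, Fin.sum_univ_three]
          ring
      have hu0 : u' ⬝ᵥ u' ≠ 0 := by rw [hu1]; norm_num
      refine ⟨rfl3 u' * rfl3 a, refl_prod_SO3 u' a hu0 ha, ?_, ?_⟩
      · rw [hact]
        have hin1 : rfl3 a *ᵥ u' = u' := by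
          rw [rfl3_mulVec, hau]
          simp
        rw [← mulVec_mulVec, hin1, rfl3_mulVec, hu1, hvv]
        funext i
        simp
        ring
      · rw [hinner, hc, trace_rfl3_mul u' a hu0 ha, dotProduct_comm u' a, hau, hu1]
        have ha' : a 0 * a 0 + a 1 * a 1 + a 2 * a 2 ≠ 0 := by
          simpa [dotProduct, Fin.sum_univ_three] using ha
        field_simp [ha']
        ring
    · -- generic case
      set w : Fin 3 → ℝ := u' + v' with hwdef
      have hv0 : v' ⬝ᵥ v' ≠ 0 := by rw [hv1]; norm_num
      set c : ℝ := u' ⬝ᵥ v' with hcdef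
      have hvw : v' ⬝ᵥ w = 1 + c := by
        rw [hwdef, dotProduct_add, hv1, hcdef, dotProduct_comm]
        ring
      have hww : w ⬝ᵥ w = 2 + 2*c := by
        rw [hwdef, dotProduct_add, add_dotProduct, add_dotProduct, hu1, hv1,
          dotProduct_comm v' u', hcdef]
        ring
      have hwu : w ⬝ᵥ u' = 1 + c := by
        rw [hwdef, add_dotProduct, hu1, dotProduct_comm v' u', hcdef]
      have hs : (2 : ℝ) + 2*c ≠ 0 := by rw [← hww]; exact hw
      refine ⟨rfl3 v' * rfl3 w, refl_prod_SO3 v' w hv0 hw, ?_, ?_⟩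
      · rw [hact]
        have hcoef : 2 * (1 + c) / (2 + 2*c) = 1 := by
          rw [div_eq_one_iff_eq hs]
          ring
        have hin1 : rfl3 w *ᵥ u' = -v' := by
          rw [rfl3_mulVec, hwu, hww, hcoef, one_smul, hwdef]
          abel
        rw [← mulVec_mulVec, hin1, rfl3_mulVec, dotProduct_neg, hv1]
        funext i
        simp
        ring
      · rw [hinner, trace_rfl3_mul v' w hv0 hw, hvw, hww, hv1]
        have h1c : (1:ℝ) + c ≠ 0 := by intro h; apply hs; linarith
        field_simp
        ring
  · -- upper bound
    rintro x ⟨R, ⟨h1, h2⟩, hRu, hx⟩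
    rw [hx, hinner]
    have := so3_trace_le_aux R h1 h2 u' hu1
    rwa [(hact R).mp hRu] at this
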